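/- Let a locally compact abelian group G act via α on a set X carrying a G-invariant uniformity 𝒰, and let 𝒰_mix be the mixed uniformity. Then x ∈ X is Bohr-type almost periodic with respect to 𝒰 (for every U ∈ 𝒰 the set P_U(x) = {t ∈ G : (α(t,x), x) ∈ U} is relatively dense in G) if and only if x is Bohr-type almost periodic with respect to 𝒰_mix. -/

import Mathlib

open Uniformity Pointwise

/-- The basic mixed entourage `V[O,U] = {(α t x, y) : t ∈ O, (x,y) ∈ U}`. -/
def mixEnt {G X : Type*} (α : G → X → X) (O : Set G) (U : Set (X × X)) : Set (X × X) :=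
  {p : X × X | ∃ t ∈ O, ∃ q ∈ U, p.1 = α t q.1 ∧ p.2 = q.2}

/-- The mixed uniformity `𝒰_mix`: all supersets of some `V[O,U]` with `U ∈ 𝒰` and `O` an open
set containing `0`. -/
def mixUniformity {G X : Type*} [AddCommGroup G] [TopologicalSpace G] [UniformSpace X]
    (α : G → X → X) : Set (Set (X × X)) :=
  {V : Set (X × X) | ∃ U ∈ 𝓤 X, ∃ O : Set G, IsOpen O ∧ (0 : G) ∈ O ∧ mixEnt α O U ⊆ V}

/-- Mixing the uniformity does not change Bohr-type almost periodicity: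
`x` is Bohr-type almost periodic with respect to `𝒰` iff it is Bohr-type almost periodic
with respect to `𝒰_mix`. -/
theorem stmt14 {G X : Type*}
    [AddCommGroup G] [TopologicalSpace G] [IsTopologicalAddGroup G]
    [LocallyCompactSpace G] [T2Space G]
    [UniformSpace X]
    (α : G → X → X)
    (hzero : ∀ x, α 0 x = x)
    (hadd : ∀ s t x, α s (α t x) = α (s + t) x)
    (hinv : ∀ U ∈ 𝓤 X, ∃ U' ∈ 𝓤 X, ∀ (t : G), ∀ p : X × X, p ∈ U' →
      (α t p.1, α t p.2) ∈ U)
    (x : X) :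
    (∀ U ∈ 𝓤 X, ∃ K : Set G, IsCompact K ∧ {t : G | (α t x, x) ∈ U} + K = Set.univ)
      ↔
    (∀ V ∈ mixUniformity α, ∃ K : Set G, IsCompact K ∧
      {t : G | (α t x, x) ∈ V} + K = Set.univ) := by

  constructor
  · intro h V hV
    obtain ⟨U, hU, O, hO, h0, hsub⟩ := hV
    obtain ⟨K, hK, hKU⟩ := h U hU
    refine ⟨K, hK, Set.eq_univ_of_univ_subset ?_⟩
    rw [← hKU]
    refine Set.add_subset_add_right fun t ht => ?_
    exact hsub ⟨0, h0, (α t x, x), ht, (hzero _).symm, rfl⟩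
  · intro h U hU
    obtain ⟨U', hU', hU'U⟩ := hinv U hU
    obtain ⟨K₀, hK₀c, hK₀⟩ := exists_compact_mem_nhds (0 : G)
    set O := interior K₀ with hOdef
    have hOopen : IsOpen O := isOpen_interior
    have h0O : (0:G) ∈ O := mem_interior_iff_mem_nhds.mpr hK₀
    obtain ⟨K, hK, hKeq⟩ := h (mixEnt α O U') ⟨U', hU', O, hOopen, h0O, subset_rfl⟩
    refine ⟨closure O + K, (hK₀c.closure_of_subset interior_subset).add hK,
      Set.eq_univ_of_univ_subset ?_⟩
    rw [← hKeq]
    have hsub : {t : G | (α t x, x) ∈ mixEnt α O U'} ⊆ {t : G | (α t x, x) ∈ U} + O := by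
      rintro t ⟨s, hs, q, hq, h1, h2⟩
      refine ⟨t - s, ?_, s, hs, sub_add_cancel t s⟩
      have hq1 : q.1 = α (t - s) x := by
        have h3 := congrArg (α (-s)) h1
        rw [hadd, hadd] at h3
        simp only [neg_add_cancel, hzero] at h3
        rw [← h3]; congr 1; abel
      have : (α (t - s) x, x) ∈ U' := by
        rw [← hq1, show x = q.2 from h2]
        simpa using hq
      have := hU'U 0 _ this
      simpa [hzero] using this
    calc {t : G | (α t x, x) ∈ mixEnt α O U'} + K
        ⊆ ({t : G | (α t x, x) ∈ U} + O) + K := Set.add_subset_add_right hsub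
      _ ⊆ {t : G | (α t x, x) ∈ U} + (closure O + K) := by
          rw [add_assoc]
          exact Set.add_subset_add_left (Set.add_subset_add_right subset_closure)
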